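/- Let λ be a self-conjugate partition and t a positive integer. Then λ is a t-core if and only if both of the following hold: (a) for every h ∈ MD(λ) with h > 2t, also h − 2t ∈ MD(λ); and (b) there do not exist h_1, h_2 ∈ MD(λ) with h_1 + h_2 ≡ 0 (mod 2t). -/
import Mathlib


/-- A partition, given as a weakly decreasing sequence of natural numbers with
finite support.  `parts i` is the size of the `(i+1)`-st row (0-indexed). -/
structure YPartition where
  parts : ℕ → ℕ
  antitone : ∀ ⦃i j : ℕ⦄, i ≤ j → parts j ≤ parts i
  support_finite : ∃ N, ∀ i, N ≤ i → parts i = 0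

namespace YPartition

/-- The conjugate partition: `conj p j` is the number of rows having more than `j`
boxes, i.e. the length of the `(j+1)`-st column (0-indexed). -/
noncomputable def conj (p : YPartition) (j : ℕ) : ℕ :=
  Set.ncard {i : ℕ | j < p.parts i}

/-- `p.IsSelfConjugate` means the conjugate of `p` equals `p`. -/
def IsSelfConjugate (p : YPartition) : Prop :=
  ∀ j, p.conj j = p.parts j

/-- The hook length of the (0-indexed) box `(i, j)`; in 1-indexed terms this is
`λ_{i+1} + λ'_{j+1} - (i+1) - (j+1) + 1`. -/
noncomputable def hook (p : YPartition) (i j : ℕ) : ℕ :=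
  p.parts i + p.conj j - i - j - 1

/-- `p.IsCore t` means no hook length of a box of `p` is divisible by `t`. -/
def IsCore (p : YPartition) (t : ℕ) : Prop :=
  ∀ i j, j < p.parts i → ¬ (t ∣ p.hook i j)

/-- The set of main diagonal hook lengths of `p`. -/
noncomputable def MD (p : YPartition) : Set ℕ :=
  {h | ∃ i, i < p.parts i ∧ h = p.hook i i}

lemma lt_conj_iff (p : YPartition) (j i : ℕ) : i < p.conj j ↔ j < p.parts i := by
  classical
  obtain ⟨N, hN⟩ := p.support_finite
  have hfin : {i : ℕ | j < p.parts i}.Finite := by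
    apply (Set.finite_Iio N).subset
    intro k hk
    simp only [Set.mem_setOf_eq] at hk
    simp only [Set.mem_Iio]
    by_contra hk'
    push_neg at hk'
    rw [hN k hk'] at hk
    omega
  constructor
  · intro h
    by_contra hbox
    push_neg at hbox
    have hsub : {i : ℕ | j < p.parts i} ⊆ Set.Iio i := by
      intro k hk
      simp only [Set.mem_setOf_eq] at hk
      simp only [Set.mem_Iio]
      by_contra hk'
      push_neg at hk'
      exact absurd (lt_of_lt_of_le hk (p.antitone hk')) (by omega)
    have hle := Set.ncard_le_ncard hsub (Set.finite_Iio i)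
    rw [← Finset.coe_Iio, Set.ncard_coe_finset, Nat.card_Iio] at hle
    exact absurd h (by unfold conj; omega)
  · intro h
    have hsub : Set.Iic i ⊆ {i : ℕ | j < p.parts i} := by
      intro k hk
      simp only [Set.mem_Iic] at hk
      exact Set.mem_setOf_eq ▸ lt_of_lt_of_le h (p.antitone hk)
    have hle := Set.ncard_le_ncard hsub hfin
    rw [← Finset.coe_Iic, Set.ncard_coe_finset, Nat.card_Iic] at hle
    unfold conj
    omega

variable {p : YPartition}

lemma lt_iff (hp : p.IsSelfConjugate) (i j : ℕ) : i < p.parts j ↔ j < p.parts i := by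
  rw [← hp j]; exact lt_conj_iff p j i

lemma le_iff (hp : p.IsSelfConjugate) (k m : ℕ) : p.parts k ≤ m ↔ p.parts m ≤ k := by
  rw [← not_lt, ← not_lt]
  exact not_congr (lt_iff hp m k)

/-- `w` is a value of `j ↦ parts j - j`. -/
def E (p : YPartition) (w : ℤ) : Prop := ∃ j : ℕ, (p.parts j : ℤ) - j = w

lemma compl_not_both (hp : p.IsSelfConjugate) {w : ℤ} (h1 : p.E w) (h2 : p.E (1 - w)) :
    False := by
  obtain ⟨j, hj⟩ := h1
  obtain ⟨k, hk⟩ := h2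
  have h3 := le_iff hp j k
  omega

lemma compl_aux (hp : p.IsSelfConjugate) (n : ℕ) (hn : 1 ≤ n) :
    p.E n ∨ p.E (1 - n) := by
  by_cases hE : p.E n
  · exact Or.inl hE
  right
  have hne : ∀ j : ℕ, p.parts j ≠ j + n := by
    intro j hj
    exact hE ⟨j, by omega⟩
  have hex : ∃ j : ℕ, p.parts j < j + n := by
    obtain ⟨N, hN⟩ := p.support_finite
    exact ⟨N, by rw [hN N le_rfl]; omega⟩
  classical
  set j₀ := Nat.find hex with hj₀
  have hfind : p.parts j₀ < j₀ + n := Nat.find_spec hex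
  match hj : j₀ with
  | 0 =>
    -- parts 0 ≤ n - 1, take k = n - 1
    refine ⟨n - 1, ?_⟩
    have h1 : p.parts (n-1) ≤ 0 := by
      rw [le_iff hp]
      omega
    omega
  | j + 1 =>
    have hmin : ¬ p.parts j < j + n := by
      have := Nat.find_min hex (by omega : j < j₀)
      omega
    push_neg at hmin
    have hj1 : p.parts j ≥ j + n + 1 := lt_of_le_of_ne hmin (Ne.symm (hne j))
    have hj2 : p.parts (j+1) ≤ j + n := by
      omega
    refine ⟨j + n, ?_⟩
    have hle1 : p.parts (j + n) ≤ j + 1 := by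
      rw [le_iff hp]; omega
    have hge1 : ¬ p.parts (j + n) ≤ j := by
      rw [le_iff hp]; omega
    omega

lemma compl (hp : p.IsSelfConjugate) (w : ℤ) : p.E w ↔ ¬ p.E (1 - w) := by
  constructor
  · intro h1 h2; exact compl_not_both hp h1 h2
  · intro h2
    rcases le_or_gt 1 w with hw | hw
    · lift w to ℕ using (by omega : (0:ℤ) ≤ w)
      rcases compl_aux hp w (by exact_mod_cast hw) with h | h
      · exact h
      · exact absurd h h2
    · have h1w : (1:ℤ) ≤ 1 - w := by omega
      lift (1 - w) to ℕ using (by omega : (0:ℤ) ≤ 1 - w) with n hn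
      rcases compl_aux hp n (by omega) with h | h
      · exact absurd h h2
      · have : (1 : ℤ) - n = w := by omega
        rwa [this] at h

lemma hook_cast (hp : p.IsSelfConjugate) {i j : ℕ} (hij : j < p.parts i) :
    (p.hook i j : ℤ) = ((p.parts i : ℤ) - i) + ((p.parts j : ℤ) - j) - 1 := by
  have h2 : i < p.parts j := (lt_iff hp i j).mpr hij
  unfold hook
  rw [hp j]
  omega

lemma MD_iff (hp : p.IsSelfConjugate) (h : ℕ) :
    h ∈ p.MD ↔ ∃ m : ℕ, 0 < m ∧ p.E (m : ℤ) ∧ h = 2 * m - 1 := by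
  constructor
  · rintro ⟨i, hi, rfl⟩
    refine ⟨p.parts i - i, by omega, ⟨i, by omega⟩, ?_⟩
    unfold hook
    rw [hp i]
    omega
  · rintro ⟨m, hm, ⟨j, hj⟩, rfl⟩
    have hpj : p.parts j = j + m := by omega
    refine ⟨j, by omega, ?_⟩
    unfold hook
    rw [hp j]
    omega

lemma parts_parts_le (hp : p.IsSelfConjugate) (i : ℕ) : p.parts (p.parts i) ≤ i :=
  (le_iff hp _ _).mpr le_rfl

lemma MD_sub (t : ℕ) (ht : 0 < t) (ha : ∀ h ∈ p.MD, 2 * t < h → h - 2 * t ∈ p.MD) :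
    ∀ c h, h ∈ p.MD → 2 * (c * t) < h → h - 2 * (c * t) ∈ p.MD := by
  intro c
  induction c with
  | zero => intro h hmem _; simpa using hmem
  | succ n ih =>
    intro h hmem hlt
    have hmul : (n + 1) * t = n * t + t := by ring
    have h1 : h - 2 * (n * t) ∈ p.MD := ih h hmem (by omega)
    have h2 := ha _ h1 ?_
    · have : h - 2 * ((n+1) * t) = h - 2 * (n * t) - 2 * t := by omega
      rwa [this]
    · -- 2 * t < h - 2 * (n * t); need h odd? h ∈ MD is odd so h - 2*(n+1)*t ≥ 1 from hlt... 
      -- hlt : 2*(n+1)*t < h gives 2*n*t + 2*t < h, so 2*t < h - 2*n*t.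
      omega

lemma core_aux (hp : p.IsSelfConjugate) (t : ℕ) (ht : 0 < t)
    (ha : ∀ h ∈ p.MD, 2 * t < h → h - 2 * t ∈ p.MD)
    (hb : ∀ h₁ ∈ p.MD, ∀ h₂ ∈ p.MD, ¬ (2 * t) ∣ (h₁ + h₂)) :
    ∀ i j, i ≤ j → j < p.parts i → ¬ t ∣ p.hook i j := by
  intro i j hle hjlt hdvd
  have hii : i < p.parts i := lt_of_le_of_lt hle hjlt
  have hij2 : i < p.parts j := (lt_iff hp i j).mpr hjlt
  have hcast := hook_cast hp hjlt
  set m := p.parts i - i with hm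
  have hmi : p.parts i = i + m := by omega
  have hm1 : 1 ≤ m := by omega
  have hMDi : 2 * m - 1 ∈ p.MD := (MD_iff hp _).mpr ⟨m, by omega, ⟨i, by omega⟩, rfl⟩
  by_cases hdiag : j < p.parts j
  · set m2 := p.parts j - j with hm2def
    have hm2' : p.parts j = j + m2 := by omega
    have hMDj : 2 * m2 - 1 ∈ p.MD := (MD_iff hp _).mpr ⟨m2, by omega, ⟨j, by omega⟩, rfl⟩
    refine hb _ hMDi _ hMDj ?_
    obtain ⟨c, hcc⟩ := hdvd
    refine ⟨c, ?_⟩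
    have hv : p.hook i j = m + m2 - 1 := by omega
    have hgoal : 2 * m - 1 + (2 * m2 - 1) = 2 * p.hook i j := by omega
    rw [hgoal, hcc]
    ring
  · push_neg at hdiag
    obtain ⟨c, hcc⟩ := hdvd
    have hvpos : 1 ≤ p.hook i j := by omega
    have hvle : p.hook i j ≤ m - 1 := by omega
    have hct : c * t = p.hook i j := by rw [hcc]; ring
    have hc1 : 0 < c := by
      rcases Nat.eq_zero_or_pos c with h0 | h
      · rw [h0, Nat.mul_zero] at hcc; omega
      · exact h
    have hlt2 : 2 * (c * t) < 2 * m - 1 := by rw [hct]; omega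
    have hsub := MD_sub t ht ha c _ hMDi hlt2
    obtain ⟨m', hm'0, hEm', hm'eq⟩ := (MD_iff hp _).mp hsub
    rw [hct] at hm'eq
    have hE1 : p.E ((m : ℤ) - p.hook i j) := by
      obtain ⟨k, hk⟩ := hEm'
      exact ⟨k, by omega⟩
    have hE2 : p.E (1 - ((m : ℤ) - p.hook i j)) := ⟨j, by omega⟩
    exact compl_not_both hp hE1 hE2


end YPartition

/-- **Ford–Mai–Sze criterion.** A self-conjugate partition `p` is a `t`-core if and
only if (a) whenever `h ∈ MD(p)` and `h > 2t`, also `h - 2t ∈ MD(p)`, and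
(b) there are no `h₁, h₂ ∈ MD(p)` with `h₁ + h₂ ≡ 0 (mod 2t)`. -/
theorem selfConjugate_isCore_iff (p : YPartition) (t : ℕ) (ht : 0 < t)
    (hp : p.IsSelfConjugate) :
    p.IsCore t ↔
      ((∀ h ∈ p.MD, 2 * t < h → h - 2 * t ∈ p.MD) ∧
        ∀ h₁ ∈ p.MD, ∀ h₂ ∈ p.MD, ¬ (2 * t) ∣ (h₁ + h₂)) := by
  open YPartition in
  constructor
  · intro hcore
    constructor
    · intro h hMD hgt
      obtain ⟨m, hm0, ⟨i, hi⟩, heq⟩ := (MD_iff hp h).mp hMD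
      subst heq
      have htm : t < m := by omega
      rw [MD_iff hp]
      have hEmt : p.E ((m : ℤ) - t) := by
        by_contra hnE
        have hE2 : p.E (1 - ((m : ℤ) - t)) := by
          rw [compl hp (1 - ((m : ℤ) - t))]
          intro hE
          apply hnE
          obtain ⟨k, hk⟩ := hE
          exact ⟨k, by omega⟩
        obtain ⟨j, hj⟩ := hE2
        have hfi : p.parts i = i + m := by omega
        have hjlt : j < p.parts i := by
          by_contra hge
          push_neg at hge
          have h1 : p.parts j ≤ p.parts (p.parts i) := p.antitone hge
          have h2 := parts_parts_le hp i
          omega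
        have hcast := hook_cast hp hjlt
        have hhook : p.hook i j = t := by omega
        exact hcore i j hjlt (hhook ▸ dvd_refl t)
      obtain ⟨k, hk⟩ := hEmt
      exact ⟨m - t, by omega, ⟨k, by omega⟩, by omega⟩
    · intro h₁ h1MD h₂ h2MD hdvd
      obtain ⟨m₁, hm1, ⟨i, hi⟩, heq1⟩ := (MD_iff hp _).mp h1MD
      obtain ⟨m₂, hm2, ⟨j, hj⟩, heq2⟩ := (MD_iff hp _).mp h2MD
      rcases le_total i j with hle | hle
      · have hjlt : j < p.parts i :=
          lt_of_lt_of_le (by omega : j < p.parts j) (p.antitone hle)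
        apply hcore i j hjlt
        obtain ⟨c, hcc⟩ := hdvd
        refine ⟨c, ?_⟩
        set u := t * c with hu
        have hcc' : h₁ + h₂ = 2 * u := by rw [hcc, hu]; ring
        have hcast := hook_cast hp hjlt
        omega
      · have hilt : i < p.parts j :=
          lt_of_lt_of_le (by omega : i < p.parts i) (p.antitone hle)
        apply hcore j i hilt
        obtain ⟨c, hcc⟩ := hdvd
        refine ⟨c, ?_⟩
        set u := t * c with hu
        have hcc' : h₁ + h₂ = 2 * u := by rw [hcc, hu]; ring
        have hcast := hook_cast hp hilt
        omega
  · rintro ⟨ha, hb⟩ i j hjlt hdvd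
    rcases le_total i j with hle | hle
    · exact core_aux hp t ht ha hb i j hle hjlt hdvd
    · have h' : i < p.parts j := (lt_iff hp i j).mpr hjlt
      have heq : p.hook j i = p.hook i j := by
        have c1 := hook_cast hp hjlt
        have c2 := hook_cast hp h'
        omega
      exact core_aux hp t ht ha hb j i hle h' (heq ▸ hdvd)
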